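/- Let Σ be a finite nonempty type and let G be a group acting on Σ. Let TM be the set of all G-equivariant Markov matrices on Σ all of whose entries are strictly positive (the general open equivariant phylogenetic model). Then TM is splittable: for every k and every family M¹, …, Mᵏ ∈ TM there exists an invertible matrix N ∈ TM such that Mⁱ·N⁻¹ ∈ TM for all i = 1, …, k. -/

import Mathlib

/-- A Markov matrix: nonnegative entries, rows sum to 1. -/
def IsMarkov {S : Type*} [Fintype S] (M : Matrix S S ℝ) : Prop :=
  (∀ i j, 0 ≤ M i j) ∧ ∀ i, ∑ j, M i j = 1

/-- A `G`-equivariant matrix: `M (g • i) (g • j) = M i j`. -/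
def IsEquivariant (G : Type*) {S : Type*} [Group G] [MulAction G S]
    (M : Matrix S S ℝ) : Prop :=
  ∀ (g : G) (i j : S), M (g • i) (g • j) = M i j

/-- The set of all `G`-equivariant Markov matrices with strictly
positive entries (the general open equivariant phylogenetic model) is
splittable: for every finite family `M¹, …, Mᵏ` in this set there is an
invertible matrix `N` in this set such that each `Mⁱ * N⁻¹` is again in the
set. -/
theorem openEquivariant_splittable
    {S : Type*} [Fintype S] [Nonempty S] [DecidableEq S]
    {G : Type*} [Group G] [MulAction G S]
    (k : ℕ) (M : Fin k → Matrix S S ℝ)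
    (hM : ∀ i, IsMarkov (M i) ∧ IsEquivariant G (M i) ∧ ∀ s t, 0 < M i s t) :
    ∃ N : Matrix S S ℝ,
      (IsMarkov N ∧ IsEquivariant G N ∧ ∀ s t, 0 < N s t) ∧ IsUnit N ∧
      ∀ i, IsMarkov (M i * N⁻¹) ∧ IsEquivariant G (M i * N⁻¹) ∧
        ∀ s t, 0 < (M i * N⁻¹) s t := by
  -- choose a small ε
  obtain ⟨ε, hε0, hε1, hεM⟩ : ∃ ε : ℝ, 0 < ε ∧ ε < 1 ∧ ∀ i s t, ε < M i s t := by
    rcases isEmpty_or_nonempty (Fin k) with h | h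
    · exact ⟨1/2, by norm_num, by norm_num, fun i => (h.false i).elim⟩
    · obtain ⟨p, -, hp⟩ := Finset.exists_min_image (Finset.univ : Finset (Fin k × S × S))
        (fun p => M p.1 p.2.1 p.2.2) ⟨⟨Classical.arbitrary _, Classical.arbitrary _,
          Classical.arbitrary _⟩, Finset.mem_univ _⟩
      have hm : 0 < M p.1 p.2.1 p.2.2 := (hM p.1).2.2 _ _
      refine ⟨min (M p.1 p.2.1 p.2.2 / 2) (1/2), by positivity, ?_, fun i s t => ?_⟩
      · exact lt_of_le_of_lt (min_le_right _ _) (by norm_num)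
      · calc min (M p.1 p.2.1 p.2.2 / 2) (1/2) ≤ M p.1 p.2.1 p.2.2 / 2 := min_le_left _ _
          _ < M p.1 p.2.1 p.2.2 := by linarith
          _ ≤ M i s t := hp (i, s, t) (Finset.mem_univ _)
  have hε1' : (0:ℝ) < 1 - ε := by linarith
  have hεne : (1:ℝ) - ε ≠ 0 := ne_of_gt hε1'
  set n : ℝ := (Fintype.card S : ℝ) with hn
  have hn0 : 0 < n := by
    simp [hn]
    exact Fintype.card_pos
  set u : ℝ := 1 / n with hu
  have hu0 : 0 < u := by positivity
  have hun : u * n = 1 := by rw [hu]; field_simp [hn0.ne']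
  have hu1 : u ≤ 1 := by
    rw [hu]
    rw [div_le_one hn0]
    simp [hn]
    exact Fintype.card_pos
  set N : Matrix S S ℝ := fun s t => (1 - ε) * (if s = t then 1 else 0) + ε * u with hNdef
  set B : Matrix S S ℝ := fun s t => ((if s = t then 1 else 0) - ε * u) / (1 - ε) with hBdef
  -- row sums of N
  have hNrow : ∀ s, ∑ t, N s t = 1 := by
    intro s
    simp only [hNdef]
    rw [Finset.sum_add_distrib, Finset.sum_const, ← Finset.mul_sum]
    rw [Finset.sum_ite_eq Finset.univ s (fun _ => (1:ℝ))]
    simp only [Finset.mem_univ, if_true, mul_one, Finset.card_univ, nsmul_eq_mul]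
    rw [← hn]
    nlinarith [hun]
  -- entries of K * B for row-stochastic K
  have hKB : ∀ (K : Matrix S S ℝ), (∀ s, ∑ t, K s t = 1) →
      ∀ s t, (K * B) s t = (K s t - ε * u) / (1 - ε) := by
    intro K hK s t
    rw [Matrix.mul_apply]
    simp only [hBdef]
    have : ∀ j, K s j * (((if j = t then 1 else 0) - ε * u) / (1 - ε)) =
        (K s j * (if j = t then 1 else 0) - K s j * (ε * u)) / (1 - ε) := by
      intro j; ring
    rw [Finset.sum_congr rfl (fun j _ => this j), ← Finset.sum_div,
      Finset.sum_sub_distrib, ← Finset.sum_mul, hK s]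
    simp [Finset.sum_ite_eq' Finset.univ t (fun j => K s j), mul_comm]
  -- N * B = 1
  have hNB : N * B = 1 := by
    ext s t
    rw [hKB N hNrow s t]
    simp only [hNdef, Matrix.one_apply]
    rcases eq_or_ne s t with h | h <;> simp [h]; field_simp; exact hεne
  have hBN : B * N = 1 := mul_eq_one_comm.mp hNB
  have hNinv : N⁻¹ = B := Matrix.inv_eq_right_inv hNB
  have hNunit : IsUnit N := ⟨⟨N, B, hNB, hBN⟩, rfl⟩
  refine ⟨N, ⟨⟨fun s t => ?_, hNrow⟩, fun g i j => ?_, fun s t => ?_⟩, hNunit, fun i => ?_⟩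
  · simp only [hNdef]
    rcases eq_or_ne s t with h | h <;> simp [h] <;> nlinarith
  · simp only [hNdef, smul_left_cancel_iff]
  · simp only [hNdef]
    rcases eq_or_ne s t with h | h <;> simp [h] <;> nlinarith
  · rw [hNinv]
    have hent : ∀ s t, (M i * B) s t = (M i s t - ε * u) / (1 - ε) :=
      hKB (M i) (hM i).1.2
    have hpos : ∀ s t, 0 < (M i * B) s t := by
      intro s t
      rw [hent s t]
      have h1 : ε * u ≤ ε := by nlinarith
      have h2 : ε < M i s t := hεM i s t
      apply div_pos _ hε1'
      linarith
    refine ⟨⟨fun s t => le_of_lt (hpos s t), fun s => ?_⟩, fun g s t => ?_, hpos⟩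
    · rw [Finset.sum_congr rfl (fun t _ => hent s t), ← Finset.sum_div,
        Finset.sum_sub_distrib, (hM i).1.2 s, Finset.sum_const, Finset.card_univ,
        nsmul_eq_mul, ← hn]
      field_simp
      linarith [hun, mul_comm u n, (by nlinarith [hun] : ε * u * n = ε)]
    · rw [hent, hent, (hM i).2.1 g s t]
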